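/- arXiv:1303.0594 — 3 statements merged into one kernel-verified Lean document; each statement's English description precedes it below -/
import Mathlib

section
/- Let d ≥ 1 and m₂, m₃, m₄ be real numbers, and define the (d+2)×(d+2) symmetric matrix R_d with block structure: R_d(1,1) = 1, R_d(1, d+2) = R_d(d+2, 1) = d·m₂, the middle d×d block equals m₂·I_d, R_d(k, d+2) = R_d(d+2, k) = m₃ for 2 ≤ k ≤ d+1, R_d(d+2, d+2) = d(m₄ − m₂²) + d²m₂², and all other entries zero. Then the characteristic polynomial of R_d factors as det(R_d − λI) = ±(m₂ − λ)^{d−1} · (α₀ + α₁λ + α₂λ² − λ³), where α₀ = (m₄m₂ − m₂³ − m₃²)d, α₁ = −m₂³d² + (m₂³ + m₃² + m₂² − m₄ − m₄m₂)d − m₂, and α₂ = m₂²d² + (m₄ − m₂²)d + m₂ + 1. -/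
open Matrix

/-- The structured `(d+2) × (d+2)` matrix `R_d` (expected Gram matrix of
`[1, x₁, …, x_d, ∑ x_k²]` with moments `m₂, m₃, m₄`), indexed by
`Fin 1 ⊕ Fin d ⊕ Fin 1`. -/
def Rmat (d : ℕ) (m₂ m₃ m₄ : ℝ) :
    Matrix (Fin 1 ⊕ Fin d ⊕ Fin 1) (Fin 1 ⊕ Fin d ⊕ Fin 1) ℝ :=
  fun i j =>
    match i, j with
    | Sum.inl _, Sum.inl _ => 1
    | Sum.inl _, Sum.inr (Sum.inr _) => d * m₂
    | Sum.inr (Sum.inr _), Sum.inl _ => d * m₂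
    | Sum.inr (Sum.inl k), Sum.inr (Sum.inl l) => if k = l then m₂ else 0
    | Sum.inr (Sum.inl _), Sum.inr (Sum.inr _) => m₃
    | Sum.inr (Sum.inr _), Sum.inr (Sum.inl _) => m₃
    | Sum.inr (Sum.inr _), Sum.inr (Sum.inr _) => d * (m₄ - m₂ ^ 2) + d ^ 2 * m₂ ^ 2
    | _, _ => 0

def eAux (d : ℕ) : (Fin d ⊕ (Fin 1 ⊕ Fin 1)) ≃ (Fin 1 ⊕ Fin d ⊕ Fin 1) where
  toFun := fun x => match x with
    | .inl k => .inr (.inl k)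
    | .inr (.inl i) => .inl i
    | .inr (.inr j) => .inr (.inr j)
  invFun := fun x => match x with
    | .inl i => .inr (.inl i)
    | .inr (.inl k) => .inl k
    | .inr (.inr j) => .inr (.inr j)
  left_inv := by rintro (k | i | j) <;> rfl
  right_inv := by rintro (i | k | j) <;> rfl

lemma det2 (N : Matrix (Fin 1 ⊕ Fin 1) (Fin 1 ⊕ Fin 1) ℝ) :
    N.det = N (Sum.inl 0) (Sum.inl 0) * N (Sum.inr 0) (Sum.inr 0)
      - N (Sum.inl 0) (Sum.inr 0) * N (Sum.inr 0) (Sum.inl 0) := by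
  rw [← Matrix.det_submatrix_equiv_self finSumFinEquiv.symm N, Matrix.det_fin_two]
  have h0 : (finSumFinEquiv.symm (0 : Fin (1+1)) : Fin 1 ⊕ Fin 1) = Sum.inl 0 := rfl
  have h1 : (finSumFinEquiv.symm (1 : Fin (1+1)) : Fin 1 ⊕ Fin 1) = Sum.inr 0 := rfl
  simp [Matrix.submatrix_apply, h0, h1]

lemma key (d : ℕ) (hd : 1 ≤ d) (m₂ m₃ m₄ lam : ℝ) (h : lam ≠ m₂) :
    (Rmat d m₂ m₃ m₄ - lam • 1).det =
        (m₂ - lam) ^ (d - 1) *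
          ((m₄ * m₂ - m₂ ^ 3 - m₃ ^ 2) * d +
            (-m₂ ^ 3 * d ^ 2 + (m₂ ^ 3 + m₃ ^ 2 + m₂ ^ 2 - m₄ - m₄ * m₂) * d - m₂) * lam +
            (m₂ ^ 2 * d ^ 2 + (m₄ - m₂ ^ 2) * d + m₂ + 1) * lam ^ 2 - lam ^ 3) := by
  have hs : m₂ - lam ≠ 0 := sub_ne_zero.mpr (Ne.symm h)
  set A : Matrix (Fin d) (Fin d) ℝ := (m₂ - lam) • 1 with hA
  set B : Matrix (Fin d) (Fin 1 ⊕ Fin 1) ℝ :=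
    fun _ j => Sum.elim (fun _ => (0:ℝ)) (fun _ => m₃) j with hB
  set C : Matrix (Fin 1 ⊕ Fin 1) (Fin d) ℝ :=
    fun i _ => Sum.elim (fun _ => (0:ℝ)) (fun _ => m₃) i with hC
  set D : Matrix (Fin 1 ⊕ Fin 1) (Fin 1 ⊕ Fin 1) ℝ :=
    fun i j => match i, j with
      | Sum.inl _, Sum.inl _ => 1 - lam
      | Sum.inl _, Sum.inr _ => d * m₂
      | Sum.inr _, Sum.inl _ => d * m₂
      | Sum.inr _, Sum.inr _ => d * (m₄ - m₂ ^ 2) + d ^ 2 * m₂ ^ 2 - lam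
    with hD
  have hblocks : (Rmat d m₂ m₃ m₄ - lam • 1).submatrix (eAux d) (eAux d)
      = Matrix.fromBlocks A B C D := by
    ext i j
    rcases i with k | i | i <;> rcases j with l | j | j <;>
      simp [eAux, Rmat, hA, hB, hC, hD, Matrix.fromBlocks, Matrix.submatrix_apply,
        Matrix.sub_apply, Matrix.smul_apply, Matrix.one_apply, smul_eq_mul,
        eq_iff_true_of_subsingleton] <;>
      split_ifs <;> simp
  letI : Invertible A := ⟨(m₂ - lam)⁻¹ • 1, by
      simp [hA, Matrix.smul_mul, Matrix.mul_smul, smul_smul, inv_mul_cancel₀ hs,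
        mul_inv_cancel₀ hs], by
      simp [hA, Matrix.smul_mul, Matrix.mul_smul, smul_smul, inv_mul_cancel₀ hs,
        mul_inv_cancel₀ hs]⟩
  have hinv : ⅟A = (m₂ - lam)⁻¹ • 1 := rfl
  have hdet : (Rmat d m₂ m₃ m₄ - lam • 1).det = A.det * (D - C * ⅟A * B).det := by
    rw [← Matrix.det_submatrix_equiv_self (eAux d), hblocks, Matrix.det_fromBlocks₁₁]
  have hdetA : A.det = (m₂ - lam) ^ d := by
    simp [hA, Matrix.det_smul]
  have hCB : C * ⅟A * B = (m₂ - lam)⁻¹ • (C * B) := by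
    rw [hinv, Matrix.mul_smul, Matrix.mul_one, Matrix.smul_mul]
  have hN : (D - C * ⅟A * B).det =
      (1 - lam) * (d * (m₄ - m₂ ^ 2) + d ^ 2 * m₂ ^ 2 - lam - (m₂ - lam)⁻¹ * (d * (m₃ * m₃)))
        - (d * m₂) * (d * m₂) := by
    rw [det2, hCB]
    simp only [Matrix.sub_apply, Matrix.smul_apply, Matrix.mul_apply]
    simp [hB, hC, hD, Matrix.sub_apply, Matrix.smul_apply, Matrix.mul_apply,
      Finset.sum_const, Finset.card_univ, smul_eq_mul, mul_comm]
    try ring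
  rw [hdet, hdetA, hN]
  have hdd : (m₂ - lam) ^ d = (m₂ - lam) ^ (d - 1) * (m₂ - lam) := by
    conv_lhs => rw [show d = (d - 1) + 1 by omega]
    rw [pow_succ]
  rw [hdd]
  have hd' : (d : ℝ) = (d : ℝ) := rfl
  field_simp
  try ring

/-- The characteristic polynomial of `R_d` factors as
`det(R_d − λ I) = ±(m₂ − λ)^(d−1)·(α₀ + α₁ λ + α₂ λ² − λ³)`. -/
theorem Rmat_charpoly_factor (d : ℕ) (hd : 1 ≤ d) (m₂ m₃ m₄ lam : ℝ) :
    (Rmat d m₂ m₃ m₄ - lam • 1).det =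
        (m₂ - lam) ^ (d - 1) *
          ((m₄ * m₂ - m₂ ^ 3 - m₃ ^ 2) * d +
            (-m₂ ^ 3 * d ^ 2 + (m₂ ^ 3 + m₃ ^ 2 + m₂ ^ 2 - m₄ - m₄ * m₂) * d - m₂) * lam +
            (m₂ ^ 2 * d ^ 2 + (m₄ - m₂ ^ 2) * d + m₂ + 1) * lam ^ 2 - lam ^ 3) ∨
      (Rmat d m₂ m₃ m₄ - lam • 1).det =
        -((m₂ - lam) ^ (d - 1) *
          ((m₄ * m₂ - m₂ ^ 3 - m₃ ^ 2) * d +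
            (-m₂ ^ 3 * d ^ 2 + (m₂ ^ 3 + m₃ ^ 2 + m₂ ^ 2 - m₄ - m₄ * m₂) * d - m₂) * lam +
            (m₂ ^ 2 * d ^ 2 + (m₄ - m₂ ^ 2) * d + m₂ + 1) * lam ^ 2 - lam ^ 3)) := by
  left
  have hfun :
      (fun lam : ℝ => (Rmat d m₂ m₃ m₄ - lam • 1).det) =
      (fun lam : ℝ => (m₂ - lam) ^ (d - 1) *
          ((m₄ * m₂ - m₂ ^ 3 - m₃ ^ 2) * d +
            (-m₂ ^ 3 * d ^ 2 + (m₂ ^ 3 + m₃ ^ 2 + m₂ ^ 2 - m₄ - m₄ * m₂) * d - m₂) * lam +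
            (m₂ ^ 2 * d ^ 2 + (m₄ - m₂ ^ 2) * d + m₂ + 1) * lam ^ 2 - lam ^ 3)) := by
    apply Continuous.ext_on (dense_compl_singleton m₂)
    · apply Continuous.matrix_det
      apply continuous_matrix
      intro i j
      simp only [Matrix.sub_apply, Matrix.smul_apply, smul_eq_mul]
      fun_prop
    · fun_prop
    · intro x hx
      exact key d hd m₂ m₃ m₄ x hx
  exact congrFun hfun lam
end

section
/- Let d ≥ 1, and let m₂, m₄ be the second and fourth moments of a non-degenerate distribution with m₄ > m₂² > 0 (and third moment m₃ = 0). The matrix R_d (with R_d(1,1)=1, middle block m₂I_d, R_d(1,d+2)=R_d(d+2,1)=dm₂, R_d(d+2,d+2)=d(m₄−m₂²)+d²m₂², other entries zero) has eigenvalues: m₂ with multiplicity d, and the two roots of λ² − ζλ + d(m₄ − m₂²) = 0 where ζ = d(m₄ − m₂²) + d²m₂² + 1. In particular its smallest eigenvalue is min{ m₂, (ζ − √(ζ² − 4d(m₄ − m₂²)))/2 }. -/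
open Matrix

/-- For a real symmetric matrix, `det (A - x•1)` is the product of `λᵢ - x`. -/
lemma det_sub_smul_one_aux {n : Type*} [Fintype n] [DecidableEq n] (A : Matrix n n ℝ)
    (hA : A.IsHermitian) (x : ℝ) :
    det (A - x • 1) = ∏ i, (hA.eigenvalues i - x) := by
  set U : Matrix n n ℝ := (hA.eigenvectorUnitary : Matrix n n ℝ) with hUdef
  have hU : U * star U = 1 := (Matrix.mem_unitaryGroup_iff).mp hA.eigenvectorUnitary.2
  set D : Matrix n n ℝ := diagonal (RCLike.ofReal ∘ hA.eigenvalues) with hDdef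
  have h1 : A - x • 1 = U * (D - x • 1) * star U := by
    rw [Matrix.mul_sub, Matrix.sub_mul, Matrix.mul_smul, mul_one, Matrix.smul_mul, hU]
    exact congrArg (· - x • (1 : Matrix n n ℝ)) hA.spectral_theorem
  rw [h1, det_mul, det_mul]
  have h2 : det U * det (D - x • 1) * det (star U) = (det U * det (star U)) * det (D - x • 1) := by
    ring
  rw [h2, ← det_mul, hU, det_one, one_mul]
  have h3 : D - x • 1 = diagonal (fun i => hA.eigenvalues i - x) := by
    rw [hDdef, Matrix.smul_one_eq_diagonal, Matrix.diagonal_sub]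
    congr 1
  rw [h3, det_diagonal]

/-- Reindexing equivalence putting the two "corner" coordinates together. -/
def RmatReidx (d : ℕ) : (Fin d ⊕ Fin 2) ≃ (Fin 1 ⊕ Fin d ⊕ Fin 1) where
  toFun x := match x with
    | Sum.inl k => Sum.inr (Sum.inl k)
    | Sum.inr ⟨0, _⟩ => Sum.inl 0
    | Sum.inr ⟨1, _⟩ => Sum.inr (Sum.inr 0)
  invFun x := match x with
    | Sum.inl _ => Sum.inr 0
    | Sum.inr (Sum.inl k) => Sum.inl k
    | Sum.inr (Sum.inr _) => Sum.inr 1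
  left_inv := by
    rintro (k | ⟨j, hj⟩)
    · rfl
    · interval_cases j <;> rfl
  right_inv := by
    rintro (⟨j, hj⟩ | k | ⟨j, hj⟩)
    · interval_cases j; rfl
    · rfl
    · interval_cases j; rfl

lemma det_Rmat_sub_aux (d : ℕ) (m₂ m₄ x : ℝ) :
    det (Rmat d m₂ 0 m₄ - x • (1 : Matrix _ _ ℝ)) =
      (m₂ - x) ^ d *
        ((1 - x) * ((d * (m₄ - m₂ ^ 2) + d ^ 2 * m₂ ^ 2) - x) - (d * m₂) ^ 2) := by
  rw [← Matrix.det_submatrix_equiv_self (RmatReidx d) (Rmat d m₂ 0 m₄ - x • 1)]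
  have hblk : (Rmat d m₂ 0 m₄ - x • (1 : Matrix _ _ ℝ)).submatrix (RmatReidx d) (RmatReidx d) =
      Matrix.fromBlocks (Matrix.diagonal fun _ : Fin d => (m₂ - x)) 0 0
        !![1 - x, d * m₂; d * m₂, (d * (m₄ - m₂ ^ 2) + d ^ 2 * m₂ ^ 2) - x] := by
    ext i j
    rcases i with k | i <;> rcases j with l | j
    · by_cases h : k = l <;>
        simp [RmatReidx, Rmat, Matrix.one_apply, h]
    · fin_cases j <;> simp [RmatReidx, Rmat, Matrix.one_apply]
    · fin_cases i <;> simp [RmatReidx, Rmat, Matrix.one_apply]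
    · fin_cases i <;> fin_cases j <;> simp [RmatReidx, Rmat, Matrix.one_apply]
  rw [hblk, Matrix.det_fromBlocks_zero₂₁, Matrix.det_diagonal, Matrix.det_fin_two_of]
  rw [Finset.prod_const, Finset.card_univ, Fintype.card_fin]
  ring

lemma count_ge_aux (d : ℕ) (lam : (Fin 1 ⊕ Fin d ⊕ Fin 1) → ℝ) (m₂ rp rm : ℝ)
    (hkey2 : ∀ x : ℝ, ∏ i, (x - lam i) = (x - m₂) ^ d * ((x - rp) * (x - rm))) :
    d ≤ Nat.card {i // lam i = m₂} := by
  classical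
  set P : Polynomial ℝ := ∏ i, (Polynomial.X - Polynomial.C (lam i)) with hP
  have hPQ : P = (Polynomial.X - Polynomial.C m₂) ^ d *
      ((Polynomial.X - Polynomial.C rp) * (Polynomial.X - Polynomial.C rm)) := by
    apply Polynomial.funext
    intro x
    simp only [hP, Polynomial.eval_prod, Polynomial.eval_mul, Polynomial.eval_pow,
      Polynomial.eval_sub, Polynomial.eval_X, Polynomial.eval_C]
    exact hkey2 x
  have hroots : P.roots = Finset.univ.val.map lam := by
    have h : P = ((Finset.univ.val.map lam).map fun a => Polynomial.X - Polynomial.C a).prod := by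
      rw [Multiset.map_map, hP, Finset.prod_eq_multiset_prod]
      rfl
    rw [h, Polynomial.roots_multiset_prod_X_sub_C]
  have hne : ((Polynomial.X - Polynomial.C rp) * (Polynomial.X - Polynomial.C rm) :
      Polynomial ℝ) ≠ 0 :=
    mul_ne_zero (Polynomial.X_sub_C_ne_zero rp) (Polynomial.X_sub_C_ne_zero rm)
  have hcount : d ≤ Multiset.count m₂ P.roots := by
    rw [hPQ, Polynomial.roots_mul
        (mul_ne_zero (pow_ne_zero d (Polynomial.X_sub_C_ne_zero m₂)) hne),
      Polynomial.roots_pow, Polynomial.roots_X_sub_C, Multiset.count_add,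
      Multiset.count_nsmul, Multiset.count_singleton]
    simp
  rw [hroots, Multiset.count_map] at hcount
  rw [Nat.card_eq_fintype_card, Fintype.card_subtype]
  refine hcount.trans (le_of_eq ?_)
  rw [Finset.card_def, Finset.filter_val]
  congr 1
  exact Multiset.filter_congr (fun x _ => by constructor <;> (intro h; exact h.symm))

/-- In the symmetric case (`m₃ = 0`), the eigenvalues of `R_d` are `m₂` with
multiplicity `d` and the two roots of `λ² − ζλ + d(m₄ − m₂²) = 0`, where
`ζ = d(m₄ − m₂²) + d²m₂² + 1`; the smallest eigenvalue is
`min{m₂, (ζ − √(ζ² − 4d(m₄ − m₂²)))/2}`. -/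
theorem Rmat_eigenvalues_symmetric (d : ℕ) (hd : 1 ≤ d) (m₂ m₄ : ℝ) (hm₂ : 0 < m₂)
    (hm₄ : m₂ ^ 2 < m₄) (hH : (Rmat d m₂ 0 m₄).IsHermitian) :
    (∀ i, hH.eigenvalues i = m₂ ∨
        hH.eigenvalues i =
          ((d * (m₄ - m₂ ^ 2) + d ^ 2 * m₂ ^ 2 + 1) +
              Real.sqrt ((d * (m₄ - m₂ ^ 2) + d ^ 2 * m₂ ^ 2 + 1) ^ 2
                - 4 * d * (m₄ - m₂ ^ 2))) / 2 ∨
        hH.eigenvalues i =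
          ((d * (m₄ - m₂ ^ 2) + d ^ 2 * m₂ ^ 2 + 1) -
              Real.sqrt ((d * (m₄ - m₂ ^ 2) + d ^ 2 * m₂ ^ 2 + 1) ^ 2
                - 4 * d * (m₄ - m₂ ^ 2))) / 2) ∧
      d ≤ Nat.card {i // hH.eigenvalues i = m₂} ∧
      (⨅ i, hH.eigenvalues i) =
        min m₂
          (((d * (m₄ - m₂ ^ 2) + d ^ 2 * m₂ ^ 2 + 1) -
              Real.sqrt ((d * (m₄ - m₂ ^ 2) + d ^ 2 * m₂ ^ 2 + 1) ^ 2
                - 4 * d * (m₄ - m₂ ^ 2))) / 2) := by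
  classical
  set lam := hH.eigenvalues with hlam
  set a : ℝ := (d : ℝ) * (m₄ - m₂ ^ 2) with ha
  set b : ℝ := (d : ℝ) ^ 2 * m₂ ^ 2 with hb
  set ζ : ℝ := a + b + 1 with hζ
  have hDnn : (0 : ℝ) ≤ ζ ^ 2 - 4 * d * (m₄ - m₂ ^ 2) := by
    have hb0 : 0 ≤ b := by positivity
    nlinarith [sq_nonneg (a + b - 1)]
  set s : ℝ := Real.sqrt (ζ ^ 2 - 4 * d * (m₄ - m₂ ^ 2)) with hs
  have hs2 : s ^ 2 = ζ ^ 2 - 4 * d * (m₄ - m₂ ^ 2) := Real.sq_sqrt hDnn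
  have hs0 : 0 ≤ s := Real.sqrt_nonneg _
  set rp : ℝ := (ζ + s) / 2 with hrp
  set rm : ℝ := (ζ - s) / 2 with hrm
  have hfact : ∀ x : ℝ,
      (1 - x) * ((d * (m₄ - m₂ ^ 2) + d ^ 2 * m₂ ^ 2) - x) - (d * m₂) ^ 2
        = (x - rp) * (x - rm) := by
    intro x
    rw [hrp, hrm, hζ, ha, hb]
    linear_combination (1 / 4 : ℝ) * hs2
  have hkey : ∀ x : ℝ, ∏ i, (lam i - x) = (m₂ - x) ^ d * ((x - rp) * (x - rm)) := by
    intro x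
    rw [← det_sub_smul_one_aux _ hH x, det_Rmat_sub_aux, hfact]
  have hcard : Fintype.card (Fin 1 ⊕ Fin d ⊕ Fin 1) = d + 2 := by
    simp [Fintype.card_sum]
    omega
  have hkey2 : ∀ x : ℝ, ∏ i, (x - lam i) = (x - m₂) ^ d * ((x - rp) * (x - rm)) := by
    intro x
    have h1 : ∏ i, (x - lam i) = ((-1 : ℝ)) ^ (d + 2) * ∏ i, (lam i - x) := by
      rw [← hcard, ← Finset.card_univ, ← Finset.prod_const, ← Finset.prod_mul_distrib]
      exact Finset.prod_congr rfl fun i _ => by ring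
    have h2 : ((-1 : ℝ)) ^ (d + 2) * (m₂ - x) ^ d = (x - m₂) ^ d := by
      rw [pow_add, neg_one_sq, mul_one, ← mul_pow, neg_one_mul, neg_sub]
    rw [h1, hkey x, ← mul_assoc, h2]
  -- Part 1
  have part1 : ∀ i, lam i = m₂ ∨ lam i = rp ∨ lam i = rm := by
    intro i
    have h0 : ∏ j, (lam i - lam j) = 0 :=
      Finset.prod_eq_zero (Finset.mem_univ i) (by simp)
    rw [hkey2 (lam i)] at h0
    rcases mul_eq_zero.mp h0 with h | h
    · left
      have := pow_eq_zero_iff (by omega : d ≠ 0) |>.mp h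
      linarith [sub_eq_zero.mp this]
    · rcases mul_eq_zero.mp h with h' | h'
      · right; left; linarith [sub_eq_zero.mp h']
      · right; right; linarith [sub_eq_zero.mp h']
  -- Part 2
  have part2 : d ≤ Nat.card {i // lam i = m₂} := count_ge_aux d lam m₂ rp rm hkey2
  refine ⟨part1, part2, ?_⟩
  -- Part 3 : infimum
  have hbdd : BddBelow (Set.range lam) := (Set.finite_range lam).bddBelow
  have hm2ex : ∃ i, lam i = m₂ := by
    by_contra hc
    push_neg at hc
    have he : IsEmpty {i // lam i = m₂} := ⟨fun x => hc x.1 x.2⟩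
    have : Nat.card {i // lam i = m₂} = 0 := Nat.card_of_isEmpty
    omega
  have hrmex : ∃ i, lam i = rm := by
    have h0 : ∏ i, (rm - lam i) = 0 := by
      rw [hkey2 rm]; simp
    obtain ⟨i, -, hi⟩ := Finset.prod_eq_zero_iff.mp h0
    exact ⟨i, by linarith [sub_eq_zero.mp hi]⟩
  have le1 : (⨅ i, lam i) ≤ m₂ := by
    obtain ⟨i, hi⟩ := hm2ex
    calc (⨅ i, lam i) ≤ lam i := ciInf_le hbdd i
      _ = m₂ := hi
  have le2 : (⨅ i, lam i) ≤ rm := by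
    obtain ⟨i, hi⟩ := hrmex
    calc (⨅ i, lam i) ≤ lam i := ciInf_le hbdd i
      _ = rm := hi
  have hrmrp : rm ≤ rp := by rw [hrm, hrp]; linarith
  have ge1 : min m₂ rm ≤ ⨅ i, lam i := by
    apply le_ciInf
    intro i
    rcases part1 i with h | h | h
    · rw [h]; exact min_le_left _ _
    · rw [h]; exact (min_le_right _ _).trans hrmrp
    · rw [h]; exact min_le_right _ _
  exact le_antisymm (le_min le1 le2) ge1
end

section
/- For the uniform distribution on [−1,1] (m₂ = 1/3, m₃ = 0, m₄ = 1/5) and any d ≥ 1, the smallest eigenvalue of the matrix R_d = diag-block matrix with R_d(1,1)=1, middle block (1/3)I_d, R_d(1,d+2)=R_d(d+2,1)=d/3, R_d(d+2,d+2)=(d/3)² + 4d/45, is (ζ − √(ζ² − 720d))/90 where ζ = 5d² + 4d + 45, and this value is strictly less than 1/3. -/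
open Matrix

/-- Membership in the spectrum from an explicit eigenvector. -/
lemma mem_spectrum_of_eigvec {n : Type*} [Fintype n] [DecidableEq n] (R : Matrix n n ℝ) (μ : ℝ)
    (v : n → ℝ) (hv0 : v ≠ 0) (hv : R *ᵥ v = μ • v) : μ ∈ spectrum ℝ R := by
  rw [spectrum.mem_iff, Matrix.isUnit_iff_isUnit_det, isUnit_iff_ne_zero, not_not,
    ← Matrix.exists_mulVec_eq_zero_iff]
  refine ⟨v, hv0, ?_⟩
  rw [Algebra.algebraMap_eq_smul_one, sub_mulVec, smul_mulVec, one_mulVec, hv, sub_self]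

/-- From membership in the spectrum, an explicit eigenvector. -/
lemma eigvec_of_mem_spectrum {n : Type*} [Fintype n] [DecidableEq n] (R : Matrix n n ℝ) (μ : ℝ)
    (h : μ ∈ spectrum ℝ R) : ∃ v : n → ℝ, v ≠ 0 ∧ R *ᵥ v = μ • v := by
  rw [spectrum.mem_iff] at h
  rw [Matrix.isUnit_iff_isUnit_det, isUnit_iff_ne_zero, not_not] at h
  obtain ⟨v, hv0, hRv⟩ := Matrix.exists_mulVec_eq_zero_iff.mpr h
  refine ⟨v, hv0, ?_⟩
  rw [Algebra.algebraMap_eq_smul_one, sub_mulVec, smul_mulVec, one_mulVec,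
    sub_eq_zero] at hRv
  exact hRv.symm

/-- The quadratic form of `Rmat` for the uniform moments, expanded. -/
lemma Rmat_quadform (d : ℕ) (x : (Fin 1 ⊕ Fin d ⊕ Fin 1) → ℝ) (c : ℝ)
    (hcdef : c = (d:ℝ) * (1/5 - (1/3)^2) + (d:ℝ)^2 * (1/3)^2) :
    x ⬝ᵥ (Rmat d (1/3) 0 (1/5) *ᵥ x) =
      (x (Sum.inl 0))^2 + (2*(d:ℝ)/3) * x (Sum.inl 0) * x (Sum.inr (Sum.inr 0))
        + (1/3) * ∑ k, (x (Sum.inr (Sum.inl k)))^2 + c * (x (Sum.inr (Sum.inr 0)))^2 := by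
  simp only [dotProduct, mulVec, Rmat, Fintype.sum_sum_type, Fin.sum_univ_one, zero_mul,
    mul_zero, add_zero, zero_add, one_mul, Finset.sum_const_zero, ite_mul,
    Finset.sum_ite_eq, Finset.mem_univ, if_true]
  have hmid : ∑ k, x (Sum.inr (Sum.inl k)) * (1/3 * x (Sum.inr (Sum.inl k)))
      = 1/3 * ∑ k, (x (Sum.inr (Sum.inl k)))^2 := by
    rw [Finset.mul_sum]; exact Finset.sum_congr rfl (fun k _ => by ring)
  rw [hmid, hcdef]; ring

lemma dotProduct_self_expand (d : ℕ) (x : (Fin 1 ⊕ Fin d ⊕ Fin 1) → ℝ) :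
    x ⬝ᵥ x = (x (Sum.inl 0))^2 + (∑ k, (x (Sum.inr (Sum.inl k)))^2)
      + (x (Sum.inr (Sum.inr 0)))^2 := by
  simp only [dotProduct, Fintype.sum_sum_type, Fin.sum_univ_one, ← sq]
  ring

/-- For the uniform distribution on `[-1,1]` (`m₂ = 1/3`, `m₃ = 0`, `m₄ = 1/5`), the
smallest eigenvalue of `R_d` equals `(ζ − √(ζ² − 720 d))/90` with `ζ = 5d² + 4d + 45`,
and this value is strictly less than `1/3`. -/
theorem Rmat_uniform_min_eigenvalue (d : ℕ) (hd : 1 ≤ d)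
    (hH : (Rmat d (1 / 3) 0 (1 / 5)).IsHermitian) :
    (⨅ i, hH.eigenvalues i) =
        ((5 * d ^ 2 + 4 * d + 45 : ℝ) -
            Real.sqrt ((5 * d ^ 2 + 4 * d + 45 : ℝ) ^ 2 - 720 * d)) / 90 ∧
      ((5 * d ^ 2 + 4 * d + 45 : ℝ) -
          Real.sqrt ((5 * d ^ 2 + 4 * d + 45 : ℝ) ^ 2 - 720 * d)) / 90 < 1 / 3 := by
  have hD1 : (1:ℝ) ≤ (d:ℝ) := by exact_mod_cast hd
  set D : ℝ := (d : ℝ) with hDdef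
  set ζ : ℝ := 5 * D ^ 2 + 4 * D + 45 with hζdef
  have hζnn : 0 ≤ ζ ^ 2 - 720 * D := by nlinarith [sq_nonneg (D - 1), sq_nonneg D, sq_nonneg (D^2 - 1)]
  set s : ℝ := Real.sqrt (ζ ^ 2 - 720 * D) with hsdef
  have hs2 : s ^ 2 = ζ ^ 2 - 720 * D := Real.sq_sqrt hζnn
  have hs0 : 0 ≤ s := Real.sqrt_nonneg _
  set lam : ℝ := (ζ - s) / 90 with hlamdef
  -- the quadratic equation satisfied by lam
  have hK : 45 * lam ^ 2 - ζ * lam + 4 * D = 0 := by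
    rw [hlamdef]; linear_combination hs2 / 180
  -- lam < 1/3
  have hlt13 : lam < 1 / 3 := by
    have hsgt : ζ - 30 < s := by nlinarith [hs2, hs0, hD1]
    rw [hlamdef]; linarith
  have hlam1 : lam < 1 := by linarith
  -- the corner entry
  set c : ℝ := D * (1/5 - (1/3)^2) + D^2 * (1/3)^2 with hcdef
  have key2 : (1 - lam) * (c - lam) = D ^ 2 / 9 := by
    rw [hcdef]; linear_combination hK / 45
  have hc : 0 < c - lam := by
    by_contra h
    push_neg at h
    have h1 : (0:ℝ) < 1 - lam := by linarith
    have h2 : (1 - lam) * (c - lam) ≤ 0 := mul_nonpos_of_nonneg_of_nonpos h1.le h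
    rw [key2] at h2
    nlinarith [hD1]
  -- the quadratic form bound
  have L1 : ∀ x : (Fin 1 ⊕ Fin d ⊕ Fin 1) → ℝ,
      lam * (x ⬝ᵥ x) ≤ x ⬝ᵥ (Rmat d (1/3) 0 (1/5) *ᵥ x) := by
    intro x
    rw [Rmat_quadform d x c hcdef, dotProduct_self_expand d x]
    set a := x (Sum.inl 0)
    set b := x (Sum.inr (Sum.inr 0))
    set S := ∑ k, (x (Sum.inr (Sum.inl k)))^2 with hSdef
    have hS0 : 0 ≤ S := Finset.sum_nonneg fun k _ => sq_nonneg _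
    rw [← hDdef]
    have hSpart : lam * S ≤ 1/3 * S := mul_le_mul_of_nonneg_right hlt13.le hS0
    have hprod : (c - lam) * (a^2 + 2*D/3*a*b + c*b^2 - lam*(a^2+b^2))
        = (D/3*a + (c-lam)*b)^2 := by linear_combination (a^2) * key2
    have hsq := sq_nonneg (D/3*a + (c-lam)*b)
    rw [← hprod] at hsq
    have h2x2 : 0 ≤ a^2 + 2*D/3*a*b + c*b^2 - lam*(a^2+b^2) :=
      (mul_nonneg_iff_of_pos_left hc).mp hsq
    linarith [hSpart, h2x2]
  -- lam is below every eigenvalue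
  have minle : ∀ i, lam ≤ hH.eigenvalues i := by
    intro i
    have hmem := hH.eigenvalues_mem_spectrum_real i
    obtain ⟨v, hv0, hv⟩ := eigvec_of_mem_spectrum _ _ hmem
    have hpos : 0 < v ⬝ᵥ v := by
      rcases lt_or_eq_of_le (Finset.sum_nonneg fun j _ => mul_self_nonneg (v j)) with h | h
      · exact h
      · exact absurd (dotProduct_self_eq_zero.mp h.symm) hv0
    have hq : v ⬝ᵥ (Rmat d (1/3) 0 (1/5) *ᵥ v) = hH.eigenvalues i * (v ⬝ᵥ v) := by
      rw [hv, dotProduct_smul, smul_eq_mul]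
    have := L1 v
    rw [hq] at this
    exact le_of_mul_le_mul_right this hpos
  -- lam is an eigenvalue, via an explicit eigenvector
  have hex : ∃ i, hH.eigenvalues i = lam := by
    rw [← Set.mem_range, ← Matrix.IsHermitian.spectrum_real_eq_range_eigenvalues hH]
    refine mem_spectrum_of_eigvec _ _
      (Sum.elim (fun _ => D / 3) (Sum.elim (fun _ => 0) (fun _ => lam - 1))) ?_ ?_
    · intro h
      have := congrFun h (Sum.inr (Sum.inr 0))
      simp only [Sum.elim_inr, Pi.zero_apply] at this
      linarith
    · funext i
      rcases i with _ | k | _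
      · simp only [mulVec, dotProduct, Rmat, Fintype.sum_sum_type, Fin.sum_univ_one,
          Sum.elim_inl, Sum.elim_inr, Pi.smul_apply, smul_eq_mul, mul_zero,
          Finset.sum_const_zero, zero_add, one_mul, add_zero]
        rw [← hDdef]
        ring
      · simp only [mulVec, dotProduct, Rmat, Fintype.sum_sum_type, Fin.sum_univ_one,
          Sum.elim_inl, Sum.elim_inr, Pi.smul_apply, smul_eq_mul, mul_zero, zero_mul,
          Finset.sum_const_zero, add_zero, zero_add, ite_mul]
      · simp only [mulVec, dotProduct, Rmat, Fintype.sum_sum_type, Fin.sum_univ_one,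
          Sum.elim_inl, Sum.elim_inr, Pi.smul_apply, smul_eq_mul, mul_zero,
          Finset.sum_const_zero, zero_add, add_zero]
        linear_combination -hK / 45
  obtain ⟨i₀, hi₀⟩ := hex
  have hbdd : BddBelow (Set.range hH.eigenvalues) := by
    refine ⟨lam, ?_⟩
    rintro y ⟨j, rfl⟩
    exact minle j
  constructor
  · refine le_antisymm ?_ (le_ciInf minle)
    calc (⨅ i, hH.eigenvalues i) ≤ hH.eigenvalues i₀ := ciInf_le hbdd i₀
    _ = lam := hi₀
  · exact hlt13
end
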